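/- Let M be a compact metric space and f : M → M a minimal homeomorphism (i.e., every orbit {fⁿ(x) : n ∈ ℤ} is dense in M). Then for every ε > 0 there exists a positive integer L = L(ε) such that for every f-invariant ergodic Borel probability measure μ on M and every x ∈ M one has μ(B(x,ε)) ≥ 1/L, where B(x,ε) denotes the open ball of radius ε centered at x. -/

import Mathlib

open MeasureTheory Metric Set

private lemma cont_zpow_aux {M : Type*} [MetricSpace M] (f : M ≃ₜ M) :
    ∀ n : ℤ, Continuous ⇑(f.toEquiv ^ n) := by
  intro n
  induction n using Int.induction_on with
  | zero => simpa using continuous_id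
  | succ n ih =>
      rw [zpow_add_one, Equiv.Perm.coe_mul]
      exact ih.comp f.continuous
  | pred n ih =>
      rw [zpow_sub_one, Equiv.Perm.coe_mul]
      exact ih.comp f.symm.continuous

private lemma meas_zpow_aux {M : Type*} [MetricSpace M] [MeasurableSpace M] [BorelSpace M]
    (f : M ≃ₜ M) (μ : Measure M) (hmp : MeasurePreserving f μ μ)
    (s : Set M) (hs : MeasurableSet s) :
    ∀ n : ℤ, μ ((f.toEquiv ^ n) ⁻¹' s) = μ s := by
  have hmeas : ∀ t : Set M, MeasurableSet t → μ (⇑f ⁻¹' t) = μ t := fun t ht =>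
    hmp.measure_preimage ht.nullMeasurableSet
  have hsymm : ∀ t : Set M, MeasurableSet t → μ (⇑f.symm ⁻¹' t) = μ t := by
    intro t ht
    have h1 : ⇑f.symm ⁻¹' t = ⇑f '' t := (Equiv.image_eq_preimage_symm f.toEquiv t).symm
    have h2 : MeasurableSet (⇑f '' t) := by
      rw [← h1]; exact f.symm.measurable ht
    rw [h1, ← hmeas _ h2]
    congr 1
    exact Set.preimage_image_eq t f.injective
  have hmeasset : ∀ n : ℤ, MeasurableSet ((f.toEquiv ^ n) ⁻¹' s) := fun n =>
    hs.preimage (cont_zpow_aux f n).measurable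
  intro n
  induction n using Int.induction_on with
  | zero => simp
  | succ n ih =>
      rw [zpow_add_one]
      have : ⇑(f.toEquiv ^ (n : ℤ) * f.toEquiv) ⁻¹' s
          = ⇑f ⁻¹' (⇑(f.toEquiv ^ (n : ℤ)) ⁻¹' s) := rfl
      rw [this, hmeas _ (hmeasset n), ih]
  | pred n ih =>
      rw [zpow_sub_one]
      have : ⇑(f.toEquiv ^ (-n : ℤ) * f.toEquiv⁻¹) ⁻¹' s
          = ⇑f.symm ⁻¹' (⇑(f.toEquiv ^ (-n : ℤ)) ⁻¹' s) := rfl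
      rw [this, hsymm _ (hmeasset (-n)), ih]

/-- Let `M` be a compact metric space and `f : M → M` a minimal
homeomorphism (every orbit `{fⁿ x : n ∈ ℤ}` is dense).  Then for every `ε > 0` there is a
positive integer `L` such that every `f`-invariant ergodic Borel probability measure gives
every open ball of radius `ε` measure at least `1 / L`. -/
theorem ball_measure_lower_bound_of_minimal
    {M : Type*} [MetricSpace M] [CompactSpace M] [MeasurableSpace M] [BorelSpace M]
    (f : M ≃ₜ M)
    (hmin : ∀ x : M, Dense (Set.range fun n : ℤ => (f.toEquiv ^ n) x)) :
    ∀ ε > 0, ∃ L : ℕ, 0 < L ∧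
      ∀ μ : Measure M, IsProbabilityMeasure μ →
        MeasurePreserving f μ μ →
        (∀ B : Set M, MeasurableSet B → f ⁻¹' B = B → μ B = 0 ∨ μ B = 1) →
        ∀ x : M, (L : ENNReal)⁻¹ ≤ μ (Metric.ball x ε) := by
  intro ε hε
  by_cases hM : Nonempty M
  · have hε2 : 0 < ε / 2 := half_pos hε
    -- Key: for every center c, a uniform lower bound for μ (ball c (ε/2)).
    have key : ∀ c : M, ∃ L : ℕ, 0 < L ∧ ∀ μ : Measure M, IsProbabilityMeasure μ →
        MeasurePreserving f μ μ → (L : ENNReal)⁻¹ ≤ μ (Metric.ball c (ε / 2)) := by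
      intro c
      set U : ℤ → Set M := fun n => (f.toEquiv ^ n) ⁻¹' Metric.ball c (ε / 2) with hU
      have hopen : ∀ n : ℤ, IsOpen (U n) := fun n =>
        isOpen_ball.preimage (cont_zpow_aux f n)
      have hcov : (Set.univ : Set M) ⊆ ⋃ n : ℤ, U n := by
        intro y _
        obtain ⟨a, ⟨n, rfl⟩, ha⟩ := (hmin y).exists_mem_open isOpen_ball
          ⟨c, mem_ball_self hε2⟩
        exact Set.mem_iUnion.2 ⟨n, ha⟩
      obtain ⟨t, ht⟩ := isCompact_univ.elim_finite_subcover U hopen hcov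
      have htne : t.Nonempty := by
        by_contra h
        rw [Finset.not_nonempty_iff_eq_empty] at h
        subst h
        simpa using ht (Set.mem_univ c)
      refine ⟨t.card, Finset.card_pos.2 htne, ?_⟩
      intro μ hprob hmp
      have hball : MeasurableSet (Metric.ball c (ε / 2)) := measurableSet_ball
      have h1 : (1 : ENNReal) ≤ (t.card : ENNReal) * μ (Metric.ball c (ε / 2)) := by
        calc (1 : ENNReal) = μ Set.univ := (measure_univ).symm
          _ ≤ μ (⋃ n ∈ t, U n) := measure_mono ht
          _ ≤ ∑ n ∈ t, μ (U n) := measure_biUnion_finset_le t U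
          _ = ∑ n ∈ t, μ (Metric.ball c (ε / 2)) := by
              refine Finset.sum_congr rfl fun n _ => ?_
              exact meas_zpow_aux f μ hmp _ hball n
          _ = (t.card : ENNReal) * μ (Metric.ball c (ε / 2)) := by
              rw [Finset.sum_const, nsmul_eq_mul]
      have hc0 : (t.card : ENNReal) ≠ 0 := by
        simpa using Finset.card_ne_zero_of_mem htne.choose_spec
      have hctop : (t.card : ENNReal) ≠ ⊤ := ENNReal.natCast_ne_top _
      calc (t.card : ENNReal)⁻¹ = (t.card : ENNReal)⁻¹ * 1 := (mul_one _).symm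
        _ ≤ (t.card : ENNReal)⁻¹ * ((t.card : ENNReal) * μ (Metric.ball c (ε / 2))) :=
            mul_le_mul_right h1 _
        _ = μ (Metric.ball c (ε / 2)) := by
            rw [← mul_assoc, ENNReal.inv_mul_cancel hc0 hctop, one_mul]
    choose g hg1 hg2 using key
    -- finite cover of M by balls of radius ε/2
    have hcov : (Set.univ : Set M) ⊆ ⋃ c : M, Metric.ball c (ε / 2) := fun y _ =>
      Set.mem_iUnion.2 ⟨y, mem_ball_self hε2⟩
    obtain ⟨s, hs⟩ := isCompact_univ.elim_finite_subcover _
      (fun c : M => isOpen_ball) hcov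
    have hsne : s.Nonempty := by
      obtain ⟨y⟩ := hM
      by_contra h
      rw [Finset.not_nonempty_iff_eq_empty] at h
      subst h
      simpa using hs (Set.mem_univ y)
    refine ⟨s.sup g, ?_, ?_⟩
    · obtain ⟨c, hc⟩ := hsne
      exact lt_of_lt_of_le (hg1 c) (Finset.le_sup hc)
    · intro μ hprob hmp _ x
      obtain ⟨c, hc, hxc⟩ : ∃ c ∈ s, x ∈ Metric.ball c (ε / 2) := by
        simpa using hs (Set.mem_univ x)
      have hsub : Metric.ball c (ε / 2) ⊆ Metric.ball x ε := by
        intro y hy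
        rw [mem_ball] at *
        calc dist y x ≤ dist y c + dist c x := dist_triangle y c x
          _ < ε / 2 + ε / 2 := by
              have := dist_comm x c ▸ hxc
              exact add_lt_add hy this
          _ = ε := add_halves ε
      have h1 : ((s.sup g : ℕ) : ENNReal)⁻¹ ≤ ((g c : ℕ) : ENNReal)⁻¹ := by
        apply ENNReal.inv_le_inv.2
        exact_mod_cast Finset.le_sup hc
      exact h1.trans ((hg2 c μ hprob hmp).trans (measure_mono hsub))
  · exact ⟨1, Nat.one_pos, fun μ _ _ _ x => absurd ⟨x⟩ hM⟩
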